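/- Define the integrated-game payoff ũ(a,r) = u_P(a, r(a)) + u_A(a,r) − u_A(a₀,r) for (a,r) ∈ A × R. Then: (i) every a_P maximizing U_0 over A satisfies ũ(a_P, r(a_P)) ≥ ũ(a, r(a)) for all a ∈ A (a_P is a Stackelberg outcome of the integrated game); and (ii) if externalities are pure — i.e. either ∂²u_A/∂a∂r ≥ 0 and ∂²u_O/∂a∂r ≥ 0 everywhere on A × R, or ∂²u_A/∂a∂r ≤ 0 and ∂²u_O/∂a∂r ≤ 0 everywhere on A × R — then every a_F maximizing U_F over A satisfies ũ(a_F, r(a_F)) ≥ ũ(a, r(a_F)) for all a ∈ A, so that (a_F, r(a_F)) is a Nash outcome of the integrated game. -/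

import Mathlib

open MeasureTheory Set

private lemma mono_aux {f f' : ℝ → ℝ} (hf : ∀ x, HasDerivAt f (f' x) x)
    {c d : ℝ} (hcd : c ≤ d) (h0 : ∀ x ∈ Set.Icc c d, 0 ≤ f' x) : f c ≤ f d := by
  have hm : MonotoneOn f (Set.Icc c d) := by
    apply monotoneOn_of_deriv_nonneg (convex_Icc c d)
    · exact fun x _ => ((hf x).differentiableAt.continuousAt).continuousWithinAt
    · exact fun x _ => (hf x).differentiableAt.differentiableWithinAt
    · intro x hx
      rw [(hf x).deriv]
      exact h0 x (interior_subset hx)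
  exact hm (left_mem_Icc.2 hcd) (right_mem_Icc.2 hcd) hcd

private lemma cont_partial {u : ℝ → ℝ → ℝ}
    (hu : ContDiff ℝ 2 fun p : ℝ × ℝ => u p.1 p.2)
    {d : ℝ → ℝ → ℝ}
    (hd : ∀ a r : ℝ, HasDerivAt (fun x => u x r) (d a r) a) :
    Continuous fun p : ℝ × ℝ => d p.1 p.2 := by
  have h2 : (fun p : ℝ × ℝ => d p.1 p.2)
      = fun p => (fderiv ℝ (fun q : ℝ × ℝ => u q.1 q.2) p) (1, 0) := by
    funext p
    have hg : HasDerivAt (fun x : ℝ => (x, p.2)) ((1:ℝ), (0:ℝ)) p.1 :=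
      (hasDerivAt_id p.1).prodMk (hasDerivAt_const p.1 p.2)
    have hF : HasFDerivAt (fun q : ℝ × ℝ => u q.1 q.2)
        (fderiv ℝ (fun q : ℝ × ℝ => u q.1 q.2) p) p :=
      ((hu.differentiable (by norm_num)).differentiableAt).hasFDerivAt
    have hcomp := hF.comp_hasDerivAt p.1 (by simpa using hg)
    exact (hd p.1 p.2).unique hcomp
  rw [h2]
  exact (hu.continuous_fderiv (by norm_num)).clm_apply continuous_const

/-- `r₁ ≽_AI r₂`: `r₁` weakly dominates `r₂` in the order of agent incentives, where
`d1 a r` denotes the partial derivative `∂₁u_A(a,r)`. -/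
def succeqAI (d1 : ℝ → ℝ → ℝ) (A : Set ℝ) (r1 r2 : ℝ) : Prop :=
  ∀ a ∈ A, d1 a r2 ≤ d1 a r1

/-- `r₁ ≻_AI r₂`: strict dominance in the order of agent incentives. -/
def succAI (d1 : ℝ → ℝ → ℝ) (A : Set ℝ) (r1 r2 : ℝ) : Prop :=
  succeqAI d1 A r1 r2 ∧ ¬ succeqAI d1 A r2 r1

/-- Assumption 1 (ranked incentives): `≽_AI` is complete on `R`, and strict dominance gives
strictly higher agent incentives everywhere. -/
def RankedIncentives (d1 : ℝ → ℝ → ℝ) (A R : Set ℝ) : Prop :=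
  (∀ r1 ∈ R, ∀ r2 ∈ R, succeqAI d1 A r1 r2 ∨ succeqAI d1 A r2 r1) ∧
  (∀ r1 ∈ R, ∀ r2 ∈ R, succAI d1 A r1 r2 → ∀ a ∈ A, d1 a r2 < d1 a r1)

/-- The robust (full-implementation) value of inducing the pure outcome `a`:
`U_F(a) = u_P(a,r(a)) + ∫_{a₀}^{a} min(max_{a'' ∈ [a₀,a']} ∂₁u_A(a',r(a'')), ∂₁u_A(a',r(a))) da'`. -/
noncomputable def UFval (d1 uP : ℝ → ℝ → ℝ) (rBR : ℝ → ℝ) (a0 a : ℝ) : ℝ :=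
  uP a (rBR a) +
    ∫ a' in a0..a,
      min (sSup ((fun a'' => d1 a' (rBR a'')) '' Set.Icc a0 a')) (d1 a' (rBR a))

/-- The partial-implementation value of inducing the pure outcome `a`:
`U_0(a) = u_P(a,r(a)) + ∫_{a₀}^{a} ∂₁u_A(a',r(a)) da'`. -/
noncomputable def U0val (d1 uP : ℝ → ℝ → ℝ) (rBR : ℝ → ℝ) (a0 a : ℝ) : ℝ :=
  uP a (rBR a) + ∫ a' in a0..a, d1 a' (rBR a)

/-- Integrated game: with `ũ(a,r) = u_P(a,r(a)) + u_A(a,r) − u_A(a₀,r)`,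
(i) every maximizer of `U_0` is a Stackelberg outcome of the integrated game, and
(ii) under pure externalities every maximizer `a_F` of `U_F` satisfies
`ũ(a_F,r(a_F)) ≥ ũ(a,r(a_F))` for all `a ∈ A`, so `(a_F, r(a_F))` is a Nash outcome. -/
theorem stmt17 (a0 abar rlo rhi : ℝ) (hA : a0 < abar) (hR : rlo < rhi)
    (uA uO uP : ℝ → ℝ → ℝ)
    (huA : ContDiff ℝ 2 fun p : ℝ × ℝ => uA p.1 p.2)
    (huO : ContDiff ℝ 2 fun p : ℝ × ℝ => uO p.1 p.2)
    (huP : ContDiff ℝ 2 fun p : ℝ × ℝ => uP p.1 p.2)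
    (hconc : ∀ a ∈ Set.Icc a0 abar, StrictConcaveOn ℝ (Set.Icc rlo rhi) (fun r => uO a r))
    (d1 dO1 : ℝ → ℝ → ℝ)
    (hd1 : ∀ a r : ℝ, HasDerivAt (fun x => uA x r) (d1 a r) a)
    (hdO1 : ∀ a r : ℝ, HasDerivAt (fun x => uO x r) (dO1 a r) a)
    (hRI : RankedIncentives d1 (Set.Icc a0 abar) (Set.Icc rlo rhi))
    (rBR : ℝ → ℝ)
    (hrBR : ∀ a ∈ Set.Icc a0 abar, rBR a ∈ Set.Icc rlo rhi ∧
      ∀ r' ∈ Set.Icc rlo rhi, r' ≠ rBR a → uO a r' < uO a (rBR a))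
    (uAar uOar : ℝ → ℝ → ℝ)
    (huAar : ∀ a r : ℝ, HasDerivAt (fun s => d1 a s) (uAar a r) r)
    (huOar : ∀ a r : ℝ, HasDerivAt (fun s => dO1 a s) (uOar a r) r) :
    (∀ aP ∈ Set.Icc a0 abar, IsMaxOn (U0val d1 uP rBR a0) (Set.Icc a0 abar) aP →
      ∀ a ∈ Set.Icc a0 abar,
        uP a (rBR a) + uA a (rBR a) - uA a0 (rBR a) ≤
          uP aP (rBR aP) + uA aP (rBR aP) - uA a0 (rBR aP)) ∧
    (((∀ a ∈ Set.Icc a0 abar, ∀ r ∈ Set.Icc rlo rhi, 0 ≤ uAar a r ∧ 0 ≤ uOar a r) ∨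
      (∀ a ∈ Set.Icc a0 abar, ∀ r ∈ Set.Icc rlo rhi, uAar a r ≤ 0 ∧ uOar a r ≤ 0)) →
      ∀ aF ∈ Set.Icc a0 abar, IsMaxOn (UFval d1 uP rBR a0) (Set.Icc a0 abar) aF →
        ∀ a ∈ Set.Icc a0 abar,
          uP a (rBR a) + uA a (rBR aF) - uA a0 (rBR aF) ≤
            uP aF (rBR aF) + uA aF (rBR aF) - uA a0 (rBR aF)) := by
  have hA' : a0 ≤ abar := hA.le
  have contd1 : Continuous fun p : ℝ × ℝ => d1 p.1 p.2 := cont_partial huA hd1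
  have ftc : ∀ (r x y : ℝ), ∫ t in x..y, d1 t r = uA y r - uA x r := by
    intro r x y
    apply intervalIntegral.integral_eq_sub_of_hasDerivAt (fun t _ => hd1 t r)
    exact (contd1.comp (continuous_id.prodMk continuous_const)).intervalIntegrable x y
  constructor
  · -- Part (i)
    intro aP haP hmax a ha
    have h := hmax ha
    simp only [Set.mem_setOf_eq, U0val] at h
    rw [ftc, ftc] at h
    linarith
  · -- Part (ii)
    intro hext aF haF hmax a ha
    have hcmem : ∀ z : ℝ, min abar (max a0 z) ∈ Icc a0 abar :=
      fun z => ⟨le_min hA' (le_max_left _ _), min_le_left _ _⟩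
    have hceq : ∀ z ∈ Icc a0 abar, min abar (max a0 z) = z := fun z hz => by
      rw [max_eq_right hz.1, min_eq_right hz.2]
    have hfacts : (∀ x ∈ Icc a0 abar, ∀ y ∈ Icc a0 abar, x ≤ y →
          ∀ t ∈ Icc a0 abar, d1 t (rBR x) ≤ d1 t (rBR y)) ∧
        (Monotone (fun t => rBR (min abar (max a0 t))) ∨
          Antitone (fun t => rBR (min abar (max a0 t)))) := by
      rcases hext with hpos | hneg
      · have hrm : ∀ x ∈ Icc a0 abar, ∀ y ∈ Icc a0 abar, x ≤ y → rBR x ≤ rBR y := by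
          intro x hx y hy hxy
          by_contra hcon
          push_neg at hcon
          have hne : rBR y ≠ rBR x := ne_of_lt hcon
          have hxlt : uO x (rBR y) < uO x (rBR x) := (hrBR x hx).2 _ (hrBR y hy).1 hne
          have hylt : uO y (rBR x) < uO y (rBR y) := (hrBR y hy).2 _ (hrBR x hx).1 hne.symm
          have hg : uO x (rBR x) - uO x (rBR y) ≤ uO y (rBR x) - uO y (rBR y) := by
            apply mono_aux (f := fun t => uO t (rBR x) - uO t (rBR y))
              (f' := fun t => dO1 t (rBR x) - dO1 t (rBR y))
              (fun t => (hdO1 t _).sub (hdO1 t _)) hxy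
            intro t ht
            have htA : t ∈ Icc a0 abar := ⟨hx.1.trans ht.1, ht.2.trans hy.2⟩
            have h2 : dO1 t (rBR y) ≤ dO1 t (rBR x) := by
              apply mono_aux (f := fun s => dO1 t s) (f' := fun s => uOar t s)
                (huOar t) hcon.le
              intro s hs
              exact (hpos t htA s ⟨(hrBR y hy).1.1.trans hs.1, hs.2.trans (hrBR x hx).1.2⟩).2
            linarith
          linarith
        constructor
        · intro x hx y hy hxy t ht
          apply mono_aux (f := fun s => d1 t s) (f' := fun s => uAar t s)
            (huAar t) (hrm x hx y hy hxy)
          intro s hs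
          exact (hpos t ht s ⟨(hrBR x hx).1.1.trans hs.1, hs.2.trans (hrBR y hy).1.2⟩).1
        · left
          intro s t hst
          exact hrm _ (hcmem s) _ (hcmem t) (min_le_min le_rfl (max_le_max le_rfl hst))
      · have hrm : ∀ x ∈ Icc a0 abar, ∀ y ∈ Icc a0 abar, x ≤ y → rBR y ≤ rBR x := by
          intro x hx y hy hxy
          by_contra hcon
          push_neg at hcon
          have hne : rBR x ≠ rBR y := ne_of_lt hcon
          have hxlt : uO x (rBR y) < uO x (rBR x) := (hrBR x hx).2 _ (hrBR y hy).1 hne.symm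
          have hylt : uO y (rBR x) < uO y (rBR y) := (hrBR y hy).2 _ (hrBR x hx).1 hne
          have hg : -(uO x (rBR y) - uO x (rBR x)) ≤ -(uO y (rBR y) - uO y (rBR x)) := by
            apply mono_aux (f := fun t => -(uO t (rBR y) - uO t (rBR x)))
              (f' := fun t => -(dO1 t (rBR y) - dO1 t (rBR x)))
              (fun t => ((hdO1 t _).sub (hdO1 t _)).neg) hxy
            intro t ht
            have htA : t ∈ Icc a0 abar := ⟨hx.1.trans ht.1, ht.2.trans hy.2⟩
            have h2 : -dO1 t (rBR x) ≤ -dO1 t (rBR y) := by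
              apply mono_aux (f := fun s => -dO1 t s) (f' := fun s => -uOar t s)
                (fun s => (huOar t s).neg) hcon.le
              intro s hs
              have := (hneg t htA s ⟨(hrBR x hx).1.1.trans hs.1, hs.2.trans (hrBR y hy).1.2⟩).2
              linarith
            linarith
          linarith
        constructor
        · intro x hx y hy hxy t ht
          have h2 : -d1 t (rBR y) ≤ -d1 t (rBR x) := by
            apply mono_aux (f := fun s => -d1 t s) (f' := fun s => -uAar t s)
              (fun s => (huAar t s).neg) (hrm x hx y hy hxy)
            intro s hs
            have := (hneg t ht s ⟨(hrBR y hy).1.1.trans hs.1, hs.2.trans (hrBR x hx).1.2⟩).1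
            linarith
          linarith
        · right
          intro s t hst
          exact hrm _ (hcmem s) _ (hcmem t) (min_le_min le_rfl (max_le_max le_rfl hst))
    obtain ⟨key, hrmono⟩ := hfacts
    set φ : ℝ → ℝ := fun t => d1 t (rBR (min abar (max a0 t))) with hφdef
    have hmeasφ : Measurable φ := by
      have hm : Measurable fun t => rBR (min abar (max a0 t)) := by
        rcases hrmono with h | h
        exacts [h.measurable, h.measurable]
      exact contd1.measurable.comp (measurable_id.prodMk hm)
    obtain ⟨C, hC⟩ := (isCompact_Icc.prod isCompact_Icc :
        IsCompact (Icc a0 abar ×ˢ Icc rlo rhi)).exists_bound_of_continuousOn contd1.continuousOn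
    have hIφ : IntegrableOn φ (Icc a0 abar) := by
      apply Measure.integrableOn_of_bounded measure_Icc_lt_top.ne hmeasφ.aestronglyMeasurable
      filter_upwards [ae_restrict_mem measurableSet_Icc] with t ht
      exact hC (t, rBR (min abar (max a0 t))) ⟨ht, (hrBR _ (hcmem t)).1⟩
    have hintφ : ∀ x ∈ Icc a0 abar, ∀ y ∈ Icc a0 abar, IntervalIntegrable φ volume x y := by
      intro x hx y hy
      apply IntegrableOn.intervalIntegrable
      apply hIφ.mono_set
      rw [← uIcc_of_le hA']
      exact uIcc_subset_uIcc ((uIcc_of_le hA').symm ▸ hx) ((uIcc_of_le hA').symm ▸ hy)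
    have UFeq : ∀ x ∈ Icc a0 abar, UFval d1 uP rBR a0 x = uP x (rBR x) + ∫ t in a0..x, φ t := by
      intro x hx
      unfold UFval
      congr 1
      apply intervalIntegral.integral_congr
      intro t ht
      rw [uIcc_of_le hx.1] at ht
      have htA : t ∈ Icc a0 abar := ⟨ht.1, ht.2.trans hx.2⟩
      have hsup : sSup ((fun a'' => d1 t (rBR a'')) '' Icc a0 t) = d1 t (rBR t) := by
        apply IsGreatest.csSup_eq
        constructor
        · exact ⟨t, right_mem_Icc.2 ht.1, rfl⟩
        · rintro _ ⟨s, hs, rfl⟩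
          exact key s ⟨hs.1, hs.2.trans htA.2⟩ t htA hs.2 t htA
      show min _ _ = d1 t (rBR (min abar (max a0 t)))
      rw [hceq t htA, hsup, min_eq_left (key t htA x hx ht.2 t htA)]
    have h1 : uP a (rBR a) + ∫ t in a0..a, φ t ≤ uP aF (rBR aF) + ∫ t in a0..aF, φ t := by
      have h := hmax ha
      simp only [Set.mem_setOf_eq] at h
      rwa [UFeq a ha, UFeq aF haF] at h
    have hsub : (∫ t in a0..aF, φ t) - ∫ t in a0..a, φ t = ∫ t in a..aF, φ t :=
      intervalIntegral.integral_interval_sub_left (hintφ a0 (left_mem_Icc.2 hA') aF haF)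
        (hintφ a0 (left_mem_Icc.2 hA') a ha)
    have hψint : ∀ x y : ℝ, IntervalIntegrable (fun t => d1 t (rBR aF)) volume x y :=
      fun x y => (contd1.comp (continuous_id.prodMk continuous_const)).intervalIntegrable x y
    have h3 : (∫ t in a..aF, φ t) ≤ ∫ t in a..aF, d1 t (rBR aF) := by
      rcases le_total a aF with h | h
      · apply intervalIntegral.integral_mono_on h (hintφ a ha aF haF) (hψint a aF)
        intro t ht
        have htA : t ∈ Icc a0 abar := ⟨ha.1.trans ht.1, ht.2.trans haF.2⟩
        show d1 t (rBR (min abar (max a0 t))) ≤ d1 t (rBR aF)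
        rw [hceq t htA]
        exact key t htA aF haF ht.2 t htA
      · rw [intervalIntegral.integral_symm, intervalIntegral.integral_symm aF a]
        apply neg_le_neg
        apply intervalIntegral.integral_mono_on h (hψint aF a) (hintφ aF haF a ha)
        intro t ht
        have htA : t ∈ Icc a0 abar := ⟨haF.1.trans ht.1, ht.2.trans ha.2⟩
        show d1 t (rBR aF) ≤ d1 t (rBR (min abar (max a0 t)))
        rw [hceq t htA]
        exact key aF haF t htA ht.1 t htA
    have hA1 : (∫ t in a..aF, d1 t (rBR aF)) = uA aF (rBR aF) - uA a (rBR aF) := ftc _ _ _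
    have hA2 : uA a (rBR aF) - uA a0 (rBR aF) = ∫ t in a0..a, d1 t (rBR aF) := (ftc _ _ _).symm
    linarith
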